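/- Let G be a finite set of genes, let R_o be an irreflexive symmetric relation on G with complementary relation R_p (all pairs (x,y), x ≠ y, not in R_o), and let (T,t) be an event-labeled tree representing R_o, R_p with labels 'speciation' (for R_o) and 'duplication' (for R_p) such that every inner vertex of T is the least common ancestor of two leaves and no two adjacent inner vertices of T carry the same label. Let σ: G → 𝕊 be a map assigning to each gene the species it resides in. Define 𝒮 to be the set of rooted species triples AB|C, over A, B, C ∈ 𝕊, such that there exist a, b, c ∈ G with σ(a) = A, σ(b) = B, σ(c) = C, σ(a), σ(b), σ(c) pairwise distinct, T contains the rooted triple ab|c, and t(lca(a,c)) = speciation. Then AB|C ∈ 𝒮 if and only if (I) A, B, C are pairwise distinct species, and there exist genes a, b, c ∈ G with σ(a) = A, σ(b) = B, σ(c) = C such that either (IIa) (a,c) ∈ R_o, (b,c) ∈ R_o and (a,b) ∉ R_o, or (IIb) (a,b), (a,c), (b,c) ∈ R_o and there exists a gene d ∈ G with (c,d) ∈ R_o, (a,d) ∉ R_o and (b,d) ∉ R_o. -/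

import Mathlib

/-- `u` lies on the (unique) path from `v` to the root of the tree `T`. -/
def Anc {V : Type} (T : SimpleGraph V) (root u v : V) : Prop :=
  ∀ p : T.Walk v root, p.IsPath → u ∈ p.support

/-- `w` is the least common ancestor of `x` and `y` in the tree `T` rooted at `root`:
it is a common ancestor and every common ancestor of `x` and `y` is an ancestor of `w`. -/
def IsLCA {V : Type} (T : SimpleGraph V) (root w x y : V) : Prop :=
  Anc T root w x ∧ Anc T root w y ∧
    ∀ u, Anc T root u x → Anc T root u y → Anc T root u w

/-- `v` is a leaf of the tree `T` rooted at `root`: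
a non-root vertex of degree one. -/
def IsLeaf {V : Type} (T : SimpleGraph V) (root v : V) : Prop :=
  v ≠ root ∧ ∃! u, T.Adj v u

/-- The simple graph `G_R` of a (symmetric irreflexive) relation `R`. -/
def relGraph {G : Type} (R : G → G → Prop) : SimpleGraph G where
  Adj x y := x ≠ y ∧ (R x y ∨ R y x)
  symm := ⟨fun _ _ h => ⟨Ne.symm h.1, h.2.symm⟩⟩
  loopless := ⟨fun _ h => h.1 rfl⟩

/-- A cograph: a simple graph with no induced path on four vertices. -/
def IsCograph {V : Type} (H : SimpleGraph V) : Prop :=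
  ¬ ∃ a b c d : V, a ≠ b ∧ a ≠ c ∧ a ≠ d ∧ b ≠ c ∧ b ≠ d ∧ c ≠ d ∧
    H.Adj a b ∧ H.Adj b c ∧ H.Adj c d ∧ ¬ H.Adj a c ∧ ¬ H.Adj a d ∧ ¬ H.Adj b d

/-- The tree `T` rooted at `root` contains the rooted triple `xy|z`:
`x`, `y`, `z` are pairwise distinct leaves and the path from `x` to `y`
does not intersect the path from `z` to the root. -/
def ContainsTriple {V : Type} (T : SimpleGraph V) (root x y z : V) : Prop :=
  x ≠ y ∧ x ≠ z ∧ y ≠ z ∧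
  IsLeaf T root x ∧ IsLeaf T root y ∧ IsLeaf T root z ∧
  ∀ (p : T.Walk x y) (q : T.Walk z root), p.IsPath → q.IsPath →
    ∀ v, v ∈ p.support → v ∉ q.support

/-- The event-labeled tree `(T,t)` (with leaves `ι x`, `x : G`) represents the pairwise
disjoint relations `R 0, …, R (k-1)`: for all distinct `x y : G` and all `i`,
the label of `lca (ι x) (ι y)` equals `i` iff `(x,y) ∈ R i`. -/
def RepresentsRel {G V : Type} (k : ℕ) (R : Fin k → G → G → Prop)
    (T : SimpleGraph V) (root : V) (ι : G → V) (t : V → Fin k) : Prop :=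
  ∀ x y : G, x ≠ y → ∀ w : V, IsLCA T root w (ι x) (ι y) →
    ∀ i : Fin k, (t w = i ↔ R i x y)

/-- There exists an event-labeled tree representing the relations `R 0, …, R (k-1)`:
a rooted tree whose leaf set is exactly `G` (via the injection `ι`) together with an
event labeling `t` such that `t (lca x y) = i ↔ (x,y) ∈ R i` for all distinct `x, y`. -/
def HasEventTree (G : Type) (k : ℕ) (R : Fin k → G → G → Prop) : Prop :=
  ∃ (V : Type) (T : SimpleGraph V) (root : V) (ι : G → V) (t : V → Fin k),
    T.IsTree ∧ Function.Injective ι ∧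
    (∀ v : V, IsLeaf T root v ↔ ∃ g : G, ι g = v) ∧
    RepresentsRel k R T root ι t

/-- Condition (ii): for any three pairwise distinct elements, the three pairs among
them lie in at most two distinct relations. -/
def AtMostTwoColors {G : Type} (k : ℕ) (R : Fin k → G → G → Prop) : Prop :=
  ∀ x y z : G, x ≠ y → x ≠ z → y ≠ z →
    ∀ i j l : Fin k, R i x y → R j x z → R l y z → (i = j ∨ i = l ∨ j = l)

/-- The triple set `𝒯_{R_1,…,R_k}`: `xy|z` belongs to it iff `x,y,z` are pairwise
distinct, `(x,z)` and `(y,z)` lie in the same relation `R i` and `(x,y)` lies in a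
different relation `R j`. -/
def TripleSet {G : Type} (k : ℕ) (R : Fin k → G → G → Prop) (x y z : G) : Prop :=
  x ≠ y ∧ x ≠ z ∧ y ≠ z ∧ ∃ i j : Fin k, i ≠ j ∧ R i x z ∧ R i y z ∧ R j x y

/-- A set of rooted triples (over `G`) is consistent if there is a rooted tree
containing all of them (elements of `G` realized as distinct vertices). -/
def Consistent {G : Type} (Tr : G → G → G → Prop) : Prop :=
  ∃ (V : Type) (T : SimpleGraph V) (root : V) (ι : G → V),
    T.IsTree ∧ Function.Injective ι ∧
    ∀ x y z : G, Tr x y z → ContainsTriple T root (ι x) (ι y) (ι z)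

/-- The two event types labeling inner vertices of the gene tree. -/
inductive Event : Type
  | speciation : Event
  | duplication : Event

set_option linter.unusedSectionVars false

section TreeAux

open SimpleGraph Walk

variable {V : Type} [DecidableEq V] {T : SimpleGraph V} {root : V}

lemma walk_eq (hT : T.IsTree) {a b : V} {p q : T.Walk a b}
    (hp : p.IsPath) (hq : q.IsPath) : p = q :=
  Subtype.ext_iff.mp (hT.IsAcyclic.path_unique ⟨p, hp⟩ ⟨q, hq⟩)

noncomputable def pTo (hT : T.IsTree) (root v : V) : T.Walk v root :=
  (hT.existsUnique_path v root).choose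

lemma pTo_isPath (hT : T.IsTree) (root v : V) : (pTo hT root v).IsPath :=
  (hT.existsUnique_path v root).choose_spec.1

lemma path_eq_pTo (hT : T.IsTree) {v : V} (p : T.Walk v root) (hp : p.IsPath) :
    p = pTo hT root v :=
  walk_eq hT hp (pTo_isPath hT root v)

lemma anc_iff (hT : T.IsTree) {u v : V} :
    Anc T root u v ↔ u ∈ (pTo hT root v).support :=
  ⟨fun h => h _ (pTo_isPath hT root v),
   fun h p hp => by rw [path_eq_pTo hT p hp]; exact h⟩

lemma anc_of_mem (hT : T.IsTree) {u v : V} {p : T.Walk v root} (hp : p.IsPath)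
    (h : u ∈ p.support) : Anc T root u v := by
  rw [anc_iff hT]; rwa [path_eq_pTo hT p hp] at h

lemma anc_refl {v : V} : Anc T root v v := fun p _ => p.start_mem_support

lemma anc_trans {u v w : V} (h1 : Anc T root u v) (h2 : Anc T root w u) :
    Anc T root w v := fun p hp => by
  have hu : u ∈ p.support := h1 p hp
  exact p.support_dropUntil_subset hu (h2 _ (hp.dropUntil hu))

lemma support_disjoint_of_path {a b u : V} {p : T.Walk a b} (hp : p.IsPath)
    (h : u ∈ p.support) :
    ∀ x, x ∈ (p.takeUntil u h).support → x ∈ (p.dropUntil u h).support.tail → False := by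
  have h2 : ((p.takeUntil u h).append (p.dropUntil u h)).IsPath := by
    rw [p.take_spec h]; exact hp
  rw [Walk.isPath_def, Walk.support_append, List.nodup_append] at h2
  exact fun x hx1 hx2 => h2.2.2 x hx1 x hx2 rfl

lemma mem_support_tail {a b x : V} {q : T.Walk a b} (hx : x ∈ q.support) (hne : x ≠ a) :
    x ∈ q.support.tail := by
  rw [q.support_eq_cons, List.mem_cons] at hx
  exact hx.resolve_left hne

lemma anc_antisymm (hT : T.IsTree) {u w : V} (h1 : Anc T root u w)
    (h2 : Anc T root w u) : u = w := by
  by_contra hne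
  have hpp : (pTo hT root u).IsPath := pTo_isPath hT root u
  have hwp : w ∈ (pTo hT root u).support := (anc_iff hT).mp h2
  have hu1 : u ∈ ((pTo hT root u).takeUntil w hwp).support :=
    Walk.start_mem_support _
  have hu2 : u ∈ ((pTo hT root u).dropUntil w hwp).support :=
    h1 _ (hpp.dropUntil hwp)
  exact support_disjoint_of_path hpp hwp u hu1 (mem_support_tail hu2 hne)

lemma anc_of_mem_takeUntil (hT : T.IsTree) {v m u : V} {p : T.Walk v root}
    (hp : p.IsPath) (hm : m ∈ p.support) (hu : u ∈ (p.takeUntil m hm).support) :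
    Anc T root m u := by
  have htk : (p.takeUntil m hm).IsPath := hp.takeUntil hm
  have hdr : (p.dropUntil m hm).IsPath := hp.dropUntil hm
  have hW : (((p.takeUntil m hm).dropUntil u hu).append (p.dropUntil m hm)).IsPath := by
    rw [Walk.isPath_def, Walk.support_append, List.nodup_append]
    have h3 := hdr.support_nodup
    rw [(p.dropUntil m hm).support_eq_cons, List.nodup_cons] at h3
    refine ⟨(htk.dropUntil hu).support_nodup, h3.2, ?_⟩
    intro x hx1 y hx2 hxy
    rw [← hxy] at hx2
    exact support_disjoint_of_path hp hm x
      (Walk.support_dropUntil_subset _ hu hx1) hx2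
  refine anc_of_mem hT hW ?_
  rw [Walk.mem_support_append_iff]
  exact Or.inl (Walk.end_mem_support _)

lemma anc_comparable (hT : T.IsTree) {u1 u2 v : V} (h1 : Anc T root u1 v)
    (h2 : Anc T root u2 v) : Anc T root u1 u2 ∨ Anc T root u2 u1 := by
  have hp := pTo_isPath hT root v
  have hm1 : u1 ∈ (pTo hT root v).support := (anc_iff hT).mp h1
  have hm2 : u2 ∈ (pTo hT root v).support := (anc_iff hT).mp h2
  rw [← Walk.take_spec _ hm1, Walk.mem_support_append_iff] at hm2
  rcases hm2 with h | h
  · exact Or.inl (anc_of_mem_takeUntil hT hp hm1 h)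
  · exact Or.inr (anc_of_mem hT (hp.dropUntil hm1) h)

lemma exists_isLCA (hT : T.IsTree) (x y : V) : ∃ w, IsLCA T root w x y := by
  have key : ∀ (z r : V) (p : T.Walk z r), root = r → p.IsPath →
      ∃ w, w ∈ p.support ∧ Anc T root w y ∧
        ∀ u, u ∈ p.support → Anc T root u y → Anc T root u w := by
    intro z r p
    induction p with
    | nil =>
      intro hz _
      subst hz
      refine ⟨root, by simp, fun q _ => q.end_mem_support, ?_⟩
      intro u hu _
      simp only [Walk.support_nil, List.mem_singleton] at hu
      subst hu
      exact anc_refl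
    | @cons a b c hadj q ih =>
      intro hc hp
      subst hc
      by_cases hy : Anc T root a y
      · exact ⟨a, Walk.start_mem_support _, hy, fun u hu _ => anc_of_mem hT hp hu⟩
      · obtain ⟨w, hw1, hw2, hw3⟩ := ih rfl hp.of_cons
        refine ⟨w, ?_, hw2, ?_⟩
        · rw [Walk.support_cons]; exact List.mem_cons_of_mem _ hw1
        · intro u hu huy
          rw [Walk.support_cons, List.mem_cons] at hu
          rcases hu with rfl | hu
          · exact absurd huy hy
          · exact hw3 u hu huy
  obtain ⟨w, hw1, hw2, hw3⟩ := key x root (pTo hT root x) rfl (pTo_isPath hT root x)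
  exact ⟨w, anc_of_mem hT (pTo_isPath hT root x) hw1, hw2,
    fun u hux huy => hw3 u ((anc_iff hT).mp hux) huy⟩

lemma isLCA_self (hT : T.IsTree) {w x : V} (h : IsLCA T root w x x) : w = x :=
  anc_antisymm hT h.1 (h.2.2 x anc_refl anc_refl)

lemma eq_of_leaf_anc (hT : T.IsTree) {u x : V} (hL : IsLeaf T root u)
    (hx : Anc T root u x) : u = x := by
  by_contra hne
  have hp : (pTo hT root x).IsPath := pTo_isPath hT root x
  have hu : u ∈ (pTo hT root x).support := (anc_iff hT).mp hx
  obtain ⟨n1, h1, r1, hr1⟩ :=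
    Walk.exists_eq_cons_of_ne hne (((pTo hT root x).takeUntil u hu).reverse)
  have hn1ne : n1 ≠ u := by
    have hPr : (((pTo hT root x).takeUntil u hu).reverse).IsPath :=
      (hp.takeUntil hu).reverse
    rw [hr1, Walk.cons_isPath_iff] at hPr
    exact fun h => hPr.2 (h ▸ r1.start_mem_support)
  have hn1mem : n1 ∈ ((pTo hT root x).takeUntil u hu).support := by
    have : n1 ∈ (((pTo hT root x).takeUntil u hu).reverse).support := by
      rw [hr1, Walk.support_cons]
      exact List.mem_cons_of_mem _ r1.start_mem_support
    rwa [Walk.support_reverse, List.mem_reverse] at this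
  obtain ⟨n2, h2, r2, hr2⟩ :=
    Walk.exists_eq_cons_of_ne hL.1 ((pTo hT root x).dropUntil u hu)
  have hn2ne : n2 ≠ u := by
    have hPr : ((pTo hT root x).dropUntil u hu).IsPath := hp.dropUntil hu
    rw [hr2, Walk.cons_isPath_iff] at hPr
    exact fun h => hPr.2 (h ▸ r2.start_mem_support)
  have hn2mem : n2 ∈ ((pTo hT root x).dropUntil u hu).support := by
    rw [hr2, Walk.support_cons]
    exact List.mem_cons_of_mem _ r2.start_mem_support
  obtain ⟨n, -, hn⟩ := hL.2
  have h12 : n1 = n2 := (hn n1 h1).trans (hn n2 h2).symm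
  exact support_disjoint_of_path hp hu n1 hn1mem
    (h12 ▸ mem_support_tail hn2mem hn2ne)

lemma lca_not_leaf (hT : T.IsTree) {w x y : V} (h : IsLCA T root w x y)
    (hxy : x ≠ y) : ¬ IsLeaf T root w := fun hL =>
  hxy ((eq_of_leaf_anc hT hL h.1).symm.trans (eq_of_leaf_anc hT hL h.2.1))

lemma lca_trichotomy (hT : T.IsTree) {x y z p q r : V} (hp : IsLCA T root p x y)
    (hq : IsLCA T root q x z) (hr : IsLCA T root r y z) :
    (p = q ∧ Anc T root p r) ∨ (p = r ∧ Anc T root p q) ∨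
      (q = r ∧ Anc T root q p) := by
  rcases anc_comparable hT hp.1 hq.1 with hpq | hqp
  · -- p is an ancestor of q
    have hpz : Anc T root p z := anc_trans hq.2.1 hpq
    have hpr : Anc T root p r := hr.2.2 p hp.2.1 hpz
    rcases anc_comparable hT hq.2.1 hr.2.1 with hqr | hrq
    · have hqy : Anc T root q y := anc_trans hr.1 hqr
      have hqp : Anc T root q p := hp.2.2 q hq.1 hqy
      exact Or.inl ⟨anc_antisymm hT hpq hqp, hpr⟩
    · have hrx : Anc T root r x := anc_trans hq.1 hrq
      have hrp : Anc T root r p := hp.2.2 r hrx hr.1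
      exact Or.inr (Or.inl ⟨anc_antisymm hT hpr hrp, hpq⟩)
  · -- q is an ancestor of p
    have hqy : Anc T root q y := anc_trans hp.2.1 hqp
    have hqr : Anc T root q r := hr.2.2 q hqy hq.2.1
    rcases anc_comparable hT hp.2.1 hr.1 with hpr | hrp
    · have hpz : Anc T root p z := anc_trans hr.2.1 hpr
      have hpq : Anc T root p q := hq.2.2 p hp.1 hpz
      exact Or.inl ⟨anc_antisymm hT hpq hqp, hpr⟩
    · have hrx : Anc T root r x := anc_trans hp.1 hrp
      have hrq : Anc T root r q := hq.2.2 r hrx hr.2.1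
      exact Or.inr (Or.inr ⟨anc_antisymm hT hqr hrq, hqp⟩)

lemma triple_iff (hT : T.IsTree) {x y z m : V}
    (hx : IsLeaf T root x) (hy : IsLeaf T root y) (hz : IsLeaf T root z)
    (hxy : x ≠ y) (hxz : x ≠ z) (hyz : y ≠ z)
    (hm : IsLCA T root m x y) :
    ContainsTriple T root x y z ↔ ¬ Anc T root m z := by
  have hmx : m ∈ (pTo hT root x).support := (anc_iff hT).mp hm.1
  have hmy : m ∈ (pTo hT root y).support := (anc_iff hT).mp hm.2.1
  have hpxP : ((pTo hT root x).takeUntil m hmx).IsPath :=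
    (pTo_isPath hT root x).takeUntil hmx
  have hpyP : ((pTo hT root y).takeUntil m hmy).IsPath :=
    (pTo_isPath hT root y).takeUntil hmy
  have s1 : ∀ v ∈ ((pTo hT root x).takeUntil m hmx).support,
      Anc T root m v ∧ Anc T root v x := fun v hv =>
    ⟨anc_of_mem_takeUntil hT (pTo_isPath hT root x) hmx hv,
     anc_of_mem hT (pTo_isPath hT root x) (Walk.support_takeUntil_subset _ hmx hv)⟩
  have s2 : ∀ v ∈ ((pTo hT root y).takeUntil m hmy).support,
      Anc T root m v ∧ Anc T root v y := fun v hv =>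
    ⟨anc_of_mem_takeUntil hT (pTo_isPath hT root y) hmy hv,
     anc_of_mem hT (pTo_isPath hT root y) (Walk.support_takeUntil_subset _ hmy hv)⟩
  have hPsup : ∀ v ∈ (((pTo hT root x).takeUntil m hmx).append
      ((pTo hT root y).takeUntil m hmy).reverse).support,
      v ∈ ((pTo hT root x).takeUntil m hmx).support ∨
        v ∈ ((pTo hT root y).takeUntil m hmy).support := by
    intro v hv
    rw [Walk.mem_support_append_iff] at hv
    rcases hv with h | h
    · exact Or.inl h
    · rw [Walk.support_reverse, List.mem_reverse] at h; exact Or.inr h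
  have hrev := hpyP.reverse.support_nodup
  rw [(((pTo hT root y).takeUntil m hmy).reverse).support_eq_cons,
    List.nodup_cons] at hrev
  have hPP : (((pTo hT root x).takeUntil m hmx).append
      ((pTo hT root y).takeUntil m hmy).reverse).IsPath := by
    rw [Walk.isPath_def, Walk.support_append, List.nodup_append]
    refine ⟨hpxP.support_nodup, hrev.2, ?_⟩
    intro v hv1 w hv2 hvw
    rw [← hvw] at hv2
    have hv2' : v ∈ ((pTo hT root y).takeUntil m hmy).support := by
      have hmem : v ∈ (((pTo hT root y).takeUntil m hmy).reverse).support := by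
        rw [(((pTo hT root y).takeUntil m hmy).reverse).support_eq_cons]
        exact List.mem_cons_of_mem _ hv2
      rwa [Walk.support_reverse, List.mem_reverse] at hmem
    have h1 := s1 v hv1
    have h2 := s2 v hv2'
    have hvm : v = m := anc_antisymm hT (hm.2.2 v h1.2 h2.2) h1.1
    exact hrev.1 (hvm ▸ hv2)
  have hmP : m ∈ (((pTo hT root x).takeUntil m hmx).append
      ((pTo hT root y).takeUntil m hmy).reverse).support := by
    rw [Walk.mem_support_append_iff]
    exact Or.inl (Walk.end_mem_support _)
  constructor
  · intro hC hAnc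
    exact hC.2.2.2.2.2.2 _ (pTo hT root z) hPP (pTo_isPath hT root z) m hmP
      ((anc_iff hT).mp hAnc)
  · intro hN
    refine ⟨hxy, hxz, hyz, hx, hy, hz, ?_⟩
    intro p q hp hq v hvp hvq
    have hpeq := walk_eq hT hp hPP
    have hAz : Anc T root v z := anc_of_mem hT hq hvq
    have hmv : Anc T root m v := by
      rcases hPsup v (hpeq ▸ hvp) with h | h
      · exact (s1 v h).1
      · exact (s2 v h).1
    exact hN (anc_trans hAz hmv)

lemma exists_child (hT : T.IsTree) {w1 w2 : V} (h12 : Anc T root w2 w1)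
    (hne : w1 ≠ w2) :
    ∃ u, T.Adj u w2 ∧ u ≠ w2 ∧ Anc T root w2 u ∧ Anc T root u w1 := by
  have hp : (pTo hT root w1).IsPath := pTo_isPath hT root w1
  have hw2 : w2 ∈ (pTo hT root w1).support := (anc_iff hT).mp h12
  obtain ⟨n, h, r, hr⟩ :=
    Walk.exists_eq_cons_of_ne (Ne.symm hne) (((pTo hT root w1).takeUntil w2 hw2).reverse)
  have hPr : ((((pTo hT root w1).takeUntil w2 hw2)).reverse).IsPath :=
    (hp.takeUntil hw2).reverse
  rw [hr, Walk.cons_isPath_iff] at hPr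
  have hnmem : n ∈ ((pTo hT root w1).takeUntil w2 hw2).support := by
    have : n ∈ ((((pTo hT root w1).takeUntil w2 hw2)).reverse).support := by
      rw [hr, Walk.support_cons]
      exact List.mem_cons_of_mem _ r.start_mem_support
    rwa [Walk.support_reverse, List.mem_reverse] at this
  refine ⟨n, h.symm, ?_, ?_, ?_⟩
  · exact fun hh => hPr.2 (hh ▸ r.start_mem_support)
  · exact anc_of_mem_takeUntil hT hp hw2 hnmem
  · exact anc_of_mem hT hp (Walk.support_takeUntil_subset _ hw2 hnmem)

end TreeAux

/-- Let `(T,t)` be an event-labeled gene tree representing the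
orthology relation `Ro` (label `speciation`) and its complementary paralogy relation
(label `duplication`), in which every inner vertex is an lca of two leaves and no two
adjacent inner vertices carry the same label, and let `σ` assign to each gene its
species. Then the species triple `AB|C` is in `𝒮` (i.e. witnessed by genes
`a, b, c` from pairwise distinct species with `T` containing `ab|c` and
`t(lca(a,c)) = speciation`) iff (I) `A, B, C` are pairwise distinct and there are genes
`a ∈ A`, `b ∈ B`, `c ∈ C` with either (IIa) `(a,c), (b,c) ∈ Ro` and `(a,b) ∉ Ro`,
or (IIb) `(a,b), (a,c), (b,c) ∈ Ro` and there is a gene `d` with `(c,d) ∈ Ro`,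
`(a,d) ∉ Ro` and `(b,d) ∉ Ro`. -/
theorem stmt10 (G : Type) [Fintype G]
    (Ro : G → G → Prop)
    (hirr : ∀ x, ¬ Ro x x)
    (hsym : ∀ x y, Ro x y → Ro y x)
    (S : Type) (σ : G → S)
    (V : Type) (T : SimpleGraph V) (root : V) (ι : G → V) (t : V → Event)
    (hT : T.IsTree) (hι : Function.Injective ι)
    (hleaves : ∀ v : V, IsLeaf T root v ↔ ∃ g : G, ι g = v)
    (hrepr : ∀ x y : G, x ≠ y → ∀ w : V, IsLCA T root w (ι x) (ι y) →
      ((t w = Event.speciation ↔ Ro x y) ∧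
       (t w = Event.duplication ↔ (x ≠ y ∧ ¬ Ro x y))))
    (hinner : ∀ v : V, ¬ IsLeaf T root v →
      ∃ a b : G, a ≠ b ∧ IsLCA T root v (ι a) (ι b))
    (hdiscr : ∀ u v : V, T.Adj u v → ¬ IsLeaf T root u → ¬ IsLeaf T root v →
      t u ≠ t v) :
    ∀ A B C : S,
      (∃ a b c : G, σ a = A ∧ σ b = B ∧ σ c = C ∧
        σ a ≠ σ b ∧ σ a ≠ σ c ∧ σ b ≠ σ c ∧
        ContainsTriple T root (ι a) (ι b) (ι c) ∧
        (∀ w : V, IsLCA T root w (ι a) (ι c) → t w = Event.speciation))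
      ↔
      ((A ≠ B ∧ A ≠ C ∧ B ≠ C) ∧
        ∃ a b c : G, σ a = A ∧ σ b = B ∧ σ c = C ∧
          ((Ro a c ∧ Ro b c ∧ ¬ Ro a b) ∨
           (Ro a b ∧ Ro a c ∧ Ro b c ∧
             ∃ d : G, Ro c d ∧ ¬ Ro a d ∧ ¬ Ro b d))) := by
  classical
  intro A B C
  have hleaf : ∀ g : G, IsLeaf T root (ι g) := fun g => (hleaves (ι g)).mpr ⟨g, rfl⟩
  have hdup : ∀ e : Event, e ≠ Event.speciation → e = Event.duplication := by
    intro e h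
    cases e
    · exact absurd rfl h
    · rfl
  have selfleaf : ∀ (gg : G) (ww : V), IsLCA T root ww (ι gg) (ι gg) →
      ¬ IsLeaf T root ww → False := fun gg ww hL hni =>
    hni (by rw [isLCA_self hT hL]; exact hleaf gg)
  constructor
  · rintro ⟨a, b, c, hA, hB, hC, hsab, hsac, hsbc, hTri, hSpec⟩
    have hab : a ≠ b := fun h => hsab (h ▸ rfl)
    have hac : a ≠ c := fun h => hsac (h ▸ rfl)
    have hbc : b ≠ c := fun h => hsbc (h ▸ rfl)
    have hiab : ι a ≠ ι b := fun h => hab (hι h)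
    have hiac : ι a ≠ ι c := fun h => hac (hι h)
    have hibc : ι b ≠ ι c := fun h => hbc (hι h)
    obtain ⟨w1, hw1⟩ := exists_isLCA (root := root) hT (ι a) (ι b)
    obtain ⟨w2, hw2⟩ := exists_isLCA (root := root) hT (ι a) (ι c)
    obtain ⟨w3, hw3⟩ := exists_isLCA (root := root) hT (ι b) (ι c)
    have hNA : ¬ Anc T root w1 (ι c) :=
      (triple_iff hT (hleaf a) (hleaf b) (hleaf c) hiab hiac hibc hw1).mp hTri
    have ht2 : t w2 = Event.speciation := hSpec w2 hw2
    have hRac : Ro a c := (hrepr a c hac w2 hw2).1.mp ht2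
    obtain ⟨hw23, hA21⟩ : w2 = w3 ∧ Anc T root w2 w1 := by
      rcases lca_trichotomy hT hw1 hw2 hw3 with ⟨heq, -⟩ | ⟨heq, -⟩ | ⟨heq, hAq⟩
      · exact absurd (heq ▸ hw2.2.1) hNA
      · exact absurd (heq ▸ hw3.2.1) hNA
      · exact ⟨heq, hAq⟩
    have ht3 : t w3 = Event.speciation := hw23 ▸ ht2
    have hRbc : Ro b c := (hrepr b c hbc w3 hw3).1.mp ht3
    refine ⟨⟨hA ▸ hB ▸ hsab, hA ▸ hC ▸ hsac, hB ▸ hC ▸ hsbc⟩, ?_⟩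
    by_cases hRab : Ro a b
    · -- case (IIb)
      have ht1 : t w1 = Event.speciation := (hrepr a b hab w1 hw1).1.mpr hRab
      have hne12 : w1 ≠ w2 := fun h => hNA (h ▸ hw2.2.1)
      obtain ⟨u, hadj, hune, hw2u, huw1⟩ := exists_child hT hA21 hne12
      have huia : Anc T root u (ι a) := anc_trans hw1.1 huw1
      have huib : Anc T root u (ι b) := anc_trans hw1.2.1 huw1
      have huinner : ¬ IsLeaf T root u := fun hL =>
        hiab ((eq_of_leaf_anc hT hL huia).symm.trans (eq_of_leaf_anc hT hL huib))
      have hw2inner : ¬ IsLeaf T root w2 := lca_not_leaf hT hw2 hiac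
      have htu : t u = Event.duplication := by
        apply hdup
        intro h
        exact hdiscr u w2 hadj huinner hw2inner (h.trans ht2.symm)
      have hune1 : u ≠ w1 := fun h => by
        rw [h, ht1] at htu
        exact Event.noConfusion htu
      obtain ⟨g1, g2, hg12, hU⟩ := hinner u huinner
      obtain ⟨d, hlad⟩ : ∃ d : G, IsLCA T root u (ι a) (ι d) := by
        obtain ⟨p', hp'⟩ := exists_isLCA (root := root) hT (ι a) (ι g1)
        obtain ⟨q', hq'⟩ := exists_isLCA (root := root) hT (ι a) (ι g2)
        have hup' : Anc T root u p' := hp'.2.2 u huia hU.1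
        have huq' : Anc T root u q' := hq'.2.2 u huia hU.2.1
        rcases anc_comparable hT hp'.1 hq'.1 with hcc | hcc
        · have hph : Anc T root p' (ι g2) := anc_trans hq'.2.1 hcc
          have hpu : Anc T root p' u := hU.2.2 p' hp'.2.1 hph
          exact ⟨g1, (anc_antisymm hT hpu hup') ▸ hp'⟩
        · have hqg : Anc T root q' (ι g1) := anc_trans hp'.2.1 hcc
          have hqu : Anc T root q' u := hU.2.2 q' hqg hq'.2.1
          exact ⟨g2, (anc_antisymm hT hqu huq') ▸ hq'⟩
      have had : a ≠ d := by
        intro hh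
        subst hh
        exact selfleaf a u hlad huinner
      have hnRad : ¬ Ro a d := ((hrepr a d had u hlad).2.mp htu).2
      -- lca of b and d is u
      obtain ⟨r', hr'⟩ := exists_isLCA (root := root) hT (ι b) (ι d)
      have hur' : Anc T root u r' := hr'.2.2 u huib hlad.2.1
      have hr'u : r' = u := by
        rcases anc_comparable hT hr'.1 hw1.2.1 with hcc | hcc
        · have hra : Anc T root r' (ι a) := anc_trans hw1.1 hcc
          have hru : Anc T root r' u := hlad.2.2 r' hra hr'.2.1
          exact anc_antisymm hT hru hur'
        · have hwd : Anc T root w1 (ι d) := anc_trans hr'.2.1 hcc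
          have hwu : Anc T root w1 u := hlad.2.2 w1 hw1.1 hwd
          exact absurd (anc_antisymm hT huw1 hwu) hune1
      have hlbd : IsLCA T root u (ι b) (ι d) := hr'u ▸ hr'
      have hbd : b ≠ d := by
        intro hh
        subst hh
        exact selfleaf b u hlbd huinner
      have hnRbd : ¬ Ro b d := ((hrepr b d hbd u hlbd).2.mp htu).2
      -- lca of c and d is w2
      obtain ⟨s', hs'⟩ := exists_isLCA (root := root) hT (ι c) (ι d)
      have hw2d : Anc T root w2 (ι d) := anc_trans hlad.2.1 hw2u
      have hw2s : Anc T root w2 s' := hs'.2.2 w2 hw2.2.1 hw2d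
      have hs'w2 : s' = w2 := by
        rcases anc_comparable hT hs'.2.1 hlad.2.1 with hcc | hcc
        · have hsa : Anc T root s' (ι a) := anc_trans huia hcc
          have hsw : Anc T root s' w2 := hw2.2.2 s' hsa hs'.1
          exact anc_antisymm hT hsw hw2s
        · have huc : Anc T root u (ι c) := anc_trans hs'.1 hcc
          have huww : Anc T root u w2 := hw2.2.2 u huia huc
          exact absurd (anc_antisymm hT huww hw2u) hune
      have hlcd : IsLCA T root w2 (ι c) (ι d) := hs'w2 ▸ hs'
      have hcd : c ≠ d := by
        intro hh
        subst hh
        exact selfleaf c w2 hlcd hw2inner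
      have hRcd : Ro c d := (hrepr c d hcd w2 hlcd).1.mp ht2
      exact ⟨a, b, c, hA, hB, hC, Or.inr ⟨hRab, hRac, hRbc, d, hRcd, hnRad, hnRbd⟩⟩
    · exact ⟨a, b, c, hA, hB, hC, Or.inl ⟨hRac, hRbc, hRab⟩⟩
  · rintro ⟨⟨hAB, hAC, hBC⟩, a, b, c, hA, hB, hC, hcase⟩
    have hsab : σ a ≠ σ b := by rw [hA, hB]; exact hAB
    have hsac : σ a ≠ σ c := by rw [hA, hC]; exact hAC
    have hsbc : σ b ≠ σ c := by rw [hB, hC]; exact hBC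
    have hab : a ≠ b := fun h => hsab (h ▸ rfl)
    have hac : a ≠ c := fun h => hsac (h ▸ rfl)
    have hbc : b ≠ c := fun h => hsbc (h ▸ rfl)
    have hiab : ι a ≠ ι b := fun h => hab (hι h)
    have hiac : ι a ≠ ι c := fun h => hac (hι h)
    have hibc : ι b ≠ ι c := fun h => hbc (hι h)
    obtain ⟨w1, hw1⟩ := exists_isLCA (root := root) hT (ι a) (ι b)
    obtain ⟨w2, hw2⟩ := exists_isLCA (root := root) hT (ι a) (ι c)
    obtain ⟨w3, hw3⟩ := exists_isLCA (root := root) hT (ι b) (ι c)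
    have hRac : Ro a c := by
      rcases hcase with ⟨h1, -, -⟩ | ⟨-, h1, -, -⟩
      · exact h1
      · exact h1
    have ht2 : t w2 = Event.speciation := (hrepr a c hac w2 hw2).1.mpr hRac
    refine ⟨a, b, c, hA, hB, hC, hsab, hsac, hsbc, ?_,
      fun w hw => (hrepr a c hac w hw).1.mpr hRac⟩
    rw [triple_iff hT (hleaf a) (hleaf b) (hleaf c) hiab hiac hibc hw1]
    rcases hcase with ⟨-, hRbc, hnRab⟩ | ⟨hRab, -, hRbc, d, hRcd, hnRad, hnRbd⟩
    · have ht1 : t w1 = Event.duplication := (hrepr a b hab w1 hw1).2.mpr ⟨hab, hnRab⟩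
      have ht3 : t w3 = Event.speciation := (hrepr b c hbc w3 hw3).1.mpr hRbc
      have hne12 : w1 ≠ w2 := fun h => by
        rw [h, ht2] at ht1
        exact Event.noConfusion ht1
      have hne13 : w1 ≠ w3 := fun h => by
        rw [h, ht3] at ht1
        exact Event.noConfusion ht1
      rcases lca_trichotomy hT hw1 hw2 hw3 with ⟨heq, -⟩ | ⟨heq, -⟩ | ⟨-, hA21⟩
      · exact absurd heq hne12
      · exact absurd heq hne13
      · intro hAnc
        have hA12 : Anc T root w1 w2 := hw2.2.2 w1 hw1.1 hAnc
        exact hne12 (anc_antisymm hT hA12 hA21)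
    · have hda : d ≠ a := fun h => (h ▸ hnRbd) (hsym a b hRab)
      have hdb : d ≠ b := fun h => (h ▸ hnRad) hRab
      have hdc : d ≠ c := fun h => hirr c (h ▸ hRcd)
      obtain ⟨v1, hv1⟩ := exists_isLCA (root := root) hT (ι a) (ι d)
      obtain ⟨v2, hv2⟩ := exists_isLCA (root := root) hT (ι b) (ι d)
      obtain ⟨v3, hv3⟩ := exists_isLCA (root := root) hT (ι c) (ι d)
      have htv1 : t v1 = Event.duplication :=
        (hrepr a d (Ne.symm hda) v1 hv1).2.mpr ⟨Ne.symm hda, hnRad⟩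
      have htv2 : t v2 = Event.duplication :=
        (hrepr b d (Ne.symm hdb) v2 hv2).2.mpr ⟨Ne.symm hdb, hnRbd⟩
      have htv3 : t v3 = Event.speciation :=
        (hrepr c d (Ne.symm hdc) v3 hv3).1.mpr hRcd
      have ht1 : t w1 = Event.speciation := (hrepr a b hab w1 hw1).1.mpr hRab
      have hAv1w1 : Anc T root v1 w1 := by
        rcases lca_trichotomy hT hw1 hv1 hv2 with ⟨heq, -⟩ | ⟨heq, -⟩ | ⟨heq, hAq⟩
        · rw [heq, htv1] at ht1
          exact Event.noConfusion ht1
        · rw [heq, htv2] at ht1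
          exact Event.noConfusion ht1
        · exact hAq
      have hAw2v1 : Anc T root w2 v1 := by
        rcases lca_trichotomy hT hw2 hv1 hv3 with ⟨heq, -⟩ | ⟨-, hAq⟩ | ⟨heq, -⟩
        · rw [heq, htv1] at ht2
          exact Event.noConfusion ht2
        · exact hAq
        · rw [← heq, htv1] at htv3
          exact Event.noConfusion htv3
      intro hAnc
      have hA12 : Anc T root w1 w2 := hw2.2.2 w1 hw1.1 hAnc
      have hA1v1 : Anc T root w1 v1 := anc_trans hAw2v1 hA12
      have hv1w1 : v1 = w1 := anc_antisymm hT hAv1w1 hA1v1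
      rw [hv1w1, ht1] at htv1
      exact Event.noConfusion htv1
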